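/- arXiv:2110.12520 — 4 statements merged into one kernel-verified Lean document; each statement's English description precedes it below -/
import Mathlib

section
/- Let X and Y be real Hilbert spaces, A : X → Y a bounded linear operator with adjoint A*, and ψ : X → ℝ a convex function. Let x̃ ∈ X, y⁰ = A x̃, and suppose the source condition holds: there exists w ∈ Y with A* w ∈ ∂ψ(x̃), i.e., ψ(x) ≥ ψ(x̃) + ⟨A* w, x − x̃⟩ for all x ∈ X. Let δ ≥ 0, λ > 0, and let y^δ ∈ Y satisfy ‖y^δ − y⁰‖ ≤ δ. If x_λ ∈ X minimizes the functional F(x) = ½‖y^δ − A x‖² + λ ψ(x) over X, then the Bregman distance satisfies ψ(x_λ) − ψ(x̃) − ⟨A* w, x_λ − x̃⟩ ≤ λ‖w‖²/2 + δ²/(2λ). -/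
open RealInnerProductSpace

/-- Convergence rate under the variational source condition:
if `A* w ∈ ∂ψ(x̃)` and `x_λ` minimizes `½‖y^δ − A x‖² + λ ψ(x)` with `‖y^δ − A x̃‖ ≤ δ`,
then the Bregman distance satisfies
`ψ(x_λ) − ψ(x̃) − ⟨A* w, x_λ − x̃⟩ ≤ λ‖w‖²/2 + δ²/(2λ)`. -/
theorem bregman_rate
    {X Y : Type*} [NormedAddCommGroup X] [InnerProductSpace ℝ X] [CompleteSpace X]
    [NormedAddCommGroup Y] [InnerProductSpace ℝ Y] [CompleteSpace Y]
    (A : X →L[ℝ] Y) (ψ : X → ℝ) (hψ : ConvexOn ℝ Set.univ ψ)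
    (xt : X) (w : Y)
    (hSC : ∀ x : X, ψ x ≥ ψ xt + ⟪(ContinuousLinearMap.adjoint A) w, x - xt⟫)
    (δ : ℝ) (hδ : 0 ≤ δ) (lam : ℝ) (hlam : 0 < lam)
    (yδ : Y) (hnoise : ‖yδ - A xt‖ ≤ δ)
    (xl : X)
    (hmin : ∀ x : X,
      (1 / 2) * ‖yδ - A xl‖ ^ 2 + lam * ψ xl ≤ (1 / 2) * ‖yδ - A x‖ ^ 2 + lam * ψ x) :
    ψ xl - ψ xt - ⟪(ContinuousLinearMap.adjoint A) w, xl - xt⟫ ≤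
      lam * ‖w‖ ^ 2 / 2 + δ ^ 2 / (2 * lam) := by
  set s : Y := yδ - A xl with hs
  set e : Y := yδ - A xt with he
  -- rewrite the adjoint inner product
  have hadj : ⟪(ContinuousLinearMap.adjoint A) w, xl - xt⟫ = ⟪w, e - s⟫ := by
    rw [ContinuousLinearMap.adjoint_inner_left, map_sub]
    congr 1
    simp only [hs, he]
    abel
  -- Key step: λ(ψ xl − ψ xt) ≤ ⟪s, e − s⟫
  have hstep : ∀ t : ℝ, 0 < t → t ≤ 1 →
      lam * (ψ xl - ψ xt) ≤ ⟪s, e - s⟫ + t * (‖e - s‖ ^ 2 / 2) := by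
    intro t ht ht1
    have hm := hmin (xl + t • (xt - xl))
    have hc : ψ ((1 - t) • xl + t • xt) ≤ (1 - t) * ψ xl + t * ψ xt :=
      hψ.2 (Set.mem_univ xl) (Set.mem_univ xt) (by linarith) ht.le (by ring)
    have hpt : xl + t • (xt - xl) = (1 - t) • xl + t • xt := by
      rw [smul_sub, sub_smul, one_smul]; abel
    rw [hpt] at hm
    have hAeq : yδ - A ((1 - t) • xl + t • xt) = s + t • (e - s) := by
      rw [map_add, map_smul, map_smul, hs, he]
      module
    rw [hAeq] at hm
    have hnorm : ‖s + t • (e - s)‖ ^ 2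
        = ‖s‖ ^ 2 + 2 * t * ⟪s, e - s⟫ + t ^ 2 * ‖e - s‖ ^ 2 := by
      rw [norm_add_sq_real, real_inner_smul_right, norm_smul]
      simp [abs_of_pos ht]
      ring
    rw [hnorm] at hm
    have hmul : t * (lam * (ψ xl - ψ xt)) ≤ t * (⟪s, e - s⟫ + t * (‖e - s‖ ^ 2 / 2)) := by
      nlinarith [hm, hc, sq_nonneg t]
    exact le_of_mul_le_mul_left (by linarith [hmul]) ht
  have hkey : lam * (ψ xl - ψ xt) ≤ ⟪s, e - s⟫ := by
    apply le_of_forall_pos_le_add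
    intro ε hε
    set t : ℝ := min 1 (ε / (‖e - s‖ ^ 2 / 2 + 1)) with htdef
    have hden : (0:ℝ) < ‖e - s‖ ^ 2 / 2 + 1 := by positivity
    have ht0 : 0 < t := lt_min one_pos (div_pos hε hden)
    have ht1 : t ≤ 1 := min_le_left _ _
    have := hstep t ht0 ht1
    have htle : t * (‖e - s‖ ^ 2 / 2) ≤ ε := by
      have h2 : t ≤ ε / (‖e - s‖ ^ 2 / 2 + 1) := min_le_right _ _
      have h3 : t * (‖e - s‖ ^ 2 / 2 + 1) ≤ ε := by
        calc t * (‖e - s‖ ^ 2 / 2 + 1) ≤ (ε / (‖e - s‖ ^ 2 / 2 + 1)) * (‖e - s‖ ^ 2 / 2 + 1) :=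
              mul_le_mul_of_nonneg_right h2 hden.le
          _ = ε := by field_simp
      nlinarith [ht0]
    linarith
  -- combine with the source condition to get λ·D ≤ ⟪s − λ•w, e − s⟫
  have hcomb : lam * (ψ xl - ψ xt - ⟪w, e - s⟫) ≤ ⟪s - lam • w, e - s⟫ := by
    have : ⟪s - lam • w, e - s⟫ = ⟪s, e - s⟫ - lam * ⟪w, e - s⟫ := by
      rw [inner_sub_left, real_inner_smul_left]
    rw [this]
    have := hkey
    nlinarith
  -- quadratic identity: 4⟪s−λw, e−s⟫ = ‖e−λw‖² − ‖e+λw−2s‖²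
  have hid : 4 * ⟪s - lam • w, e - s⟫ = ‖e - lam • w‖ ^ 2 - ‖e + lam • w - (2:ℝ) • s‖ ^ 2 := by
    rw [← real_inner_self_eq_norm_sq, ← real_inner_self_eq_norm_sq]
    simp only [inner_sub_left, inner_sub_right, inner_add_left, inner_add_right,
      real_inner_smul_left, real_inner_smul_right, real_inner_comm s e,
      real_inner_comm s w, real_inner_comm e w]
    ring
  have hq : ⟪s - lam • w, e - s⟫ ≤ ‖e - lam • w‖ ^ 2 / 4 := by
    nlinarith [sq_nonneg ‖e + lam • w - (2:ℝ) • s‖]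
  -- bound ‖e − λw‖² ≤ 2δ² + 2λ²‖w‖²
  have hb : ‖e - lam • w‖ ^ 2 ≤ 2 * δ ^ 2 + 2 * lam ^ 2 * ‖w‖ ^ 2 := by
    have h1 : ‖e - lam • w‖ ≤ ‖e‖ + ‖lam • w‖ := norm_sub_le _ _
    have h2 : ‖lam • w‖ = lam * ‖w‖ := by rw [norm_smul, Real.norm_eq_abs, abs_of_pos hlam]
    have h3 : ‖e‖ ≤ δ := hnoise
    have h4 : (0:ℝ) ≤ ‖e‖ := norm_nonneg _
    have h5 : (0:ℝ) ≤ ‖w‖ := norm_nonneg _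
    nlinarith [sq_nonneg (‖e‖ - lam * ‖w‖), sq_nonneg (δ - lam * ‖w‖), norm_nonneg (e - lam • w)]
  -- conclude
  rw [hadj]
  have hfinal : lam * (ψ xl - ψ xt - ⟪w, e - s⟫) ≤ δ ^ 2 / 2 + lam ^ 2 * ‖w‖ ^ 2 / 2 := by
    linarith
  have hdiv : ψ xl - ψ xt - ⟪w, e - s⟫ ≤ (δ ^ 2 / 2 + lam ^ 2 * ‖w‖ ^ 2 / 2) / lam :=
    (le_div_iff₀ hlam).2 (by linarith)
  have heq : (δ ^ 2 / 2 + lam ^ 2 * ‖w‖ ^ 2 / 2) / lam = lam * ‖w‖ ^ 2 / 2 + δ ^ 2 / (2 * lam) := by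
    field_simp
    ring
  linarith [heq ▸ hdiv]
end

section
/- Let X and Y be real Hilbert spaces, A : X → Y a bounded linear operator with adjoint A*, and ψ : X → ℝ a convex function. Let x̃ ∈ X, y⁰ = A x̃, and suppose A* w ∈ ∂ψ(x̃) for some w ∈ Y. Let δ > 0 and y^δ ∈ Y with ‖y^δ − y⁰‖ ≤ δ. If x_δ minimizes F(x) = ½‖y^δ − A x‖² + δ ψ(x) over X (i.e., the parameter choice λ = δ), then ψ(x_δ) − ψ(x̃) − ⟨A* w, x_δ − x̃⟩ ≤ δ(‖w‖² + 1)/2; in particular the Bregman distance converges to 0 at rate O(δ) as δ → 0. -/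
open RealInnerProductSpace

/-- A priori parameter choice `λ = δ`: the Bregman distance is bounded by
`δ(‖w‖² + 1)/2`, hence converges to `0` at rate `O(δ)`. -/
theorem bregman_rate_lambda_eq_delta
    {X Y : Type*} [NormedAddCommGroup X] [InnerProductSpace ℝ X] [CompleteSpace X]
    [NormedAddCommGroup Y] [InnerProductSpace ℝ Y] [CompleteSpace Y]
    (A : X →L[ℝ] Y) (ψ : X → ℝ) (hψ : ConvexOn ℝ Set.univ ψ)
    (xt : X) (w : Y)
    (hSC : ∀ x : X, ψ x ≥ ψ xt + ⟪(ContinuousLinearMap.adjoint A) w, x - xt⟫)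
    (δ : ℝ) (hδ : 0 < δ)
    (yδ : Y) (hnoise : ‖yδ - A xt‖ ≤ δ)
    (xδ : X)
    (hmin : ∀ x : X,
      (1 / 2) * ‖yδ - A xδ‖ ^ 2 + δ * ψ xδ ≤ (1 / 2) * ‖yδ - A x‖ ^ 2 + δ * ψ x) :
    ψ xδ - ψ xt - ⟪(ContinuousLinearMap.adjoint A) w, xδ - xt⟫ ≤ δ * (‖w‖ ^ 2 + 1) / 2 := by
  set r : Y := yδ - A xδ with hr
  set e : Y := yδ - A xt with he
  have hAdiff : A xδ - A xt = e - r := by rw [he, hr]; abel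
  -- Step 1: variational inequality from minimality along the segment
  have key : δ * (ψ xδ - ψ xt) ≤ ⟪r, e - r⟫ := by
    have hstep : ∀ t : ℝ, 0 < t → t ≤ 1 →
        δ * (ψ xδ - ψ xt) ≤ ⟪r, e - r⟫ + (t / 2) * ‖e - r‖ ^ 2 := by
      intro t ht ht1
      have hx := hmin (xδ + t • (xt - xδ))
      have hψx : ψ (xδ + t • (xt - xδ)) ≤ (1 - t) * ψ xδ + t * ψ xt := by
        have hcomb : (1 - t) • xδ + t • xt = xδ + t • (xt - xδ) := by
          rw [sub_smul, one_smul, smul_sub]; abel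
        have h := hψ.2 (Set.mem_univ xδ) (Set.mem_univ xt)
          (by linarith : (0:ℝ) ≤ 1 - t) ht.le (by ring)
        rw [hcomb] at h
        simpa [smul_eq_mul] using h
      have hAx : yδ - A (xδ + t • (xt - xδ)) = r + t • (e - r) := by
        simp only [map_add, map_smul, map_sub, hr, he, smul_sub]
        abel
      have hnorm : ‖yδ - A (xδ + t • (xt - xδ))‖ ^ 2
          = ‖r‖ ^ 2 + 2 * t * ⟪r, e - r⟫ + t ^ 2 * ‖e - r‖ ^ 2 := by
        rw [hAx, norm_add_sq_real, real_inner_smul_right, norm_smul]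
        simp [mul_pow, abs_of_pos ht]
        ring
      have h2 : (1 / 2) * ‖r‖ ^ 2 + δ * ψ xδ
          ≤ (1 / 2) * (‖r‖ ^ 2 + 2 * t * ⟪r, e - r⟫ + t ^ 2 * ‖e - r‖ ^ 2)
            + δ * ((1 - t) * ψ xδ + t * ψ xt) := by
        calc (1 / 2) * ‖r‖ ^ 2 + δ * ψ xδ
            ≤ (1 / 2) * ‖yδ - A (xδ + t • (xt - xδ))‖ ^ 2
              + δ * ψ (xδ + t • (xt - xδ)) := hx
          _ ≤ _ := by
              rw [hnorm]
              have := mul_le_mul_of_nonneg_left hψx hδ.le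
              linarith
      have h3 : δ * t * (ψ xδ - ψ xt) ≤ t * ⟪r, e - r⟫ + (t ^ 2 / 2) * ‖e - r‖ ^ 2 := by
        nlinarith
      have := mul_le_mul_of_nonneg_left h3 (le_of_lt (inv_pos.mpr ht))
      calc δ * (ψ xδ - ψ xt) = t⁻¹ * (δ * t * (ψ xδ - ψ xt)) := by
            field_simp
        _ ≤ t⁻¹ * (t * ⟪r, e - r⟫ + (t ^ 2 / 2) * ‖e - r‖ ^ 2) := this
        _ = ⟪r, e - r⟫ + (t / 2) * ‖e - r‖ ^ 2 := by
            field_simp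
    -- take t → 0
    refine le_of_forall_pos_le_add fun ε hε => ?_
    set t : ℝ := min 1 (2 * ε / (‖e - r‖ ^ 2 + 1)) with hT
    have hpos : 0 < ‖e - r‖ ^ 2 + 1 := by positivity
    have ht0 : 0 < t := lt_min one_pos (by positivity)
    have ht1 : t ≤ 1 := min_le_left _ _
    have := hstep t ht0 ht1
    have h4 : (t / 2) * ‖e - r‖ ^ 2 ≤ ε := by
      have h5 : t ≤ 2 * ε / (‖e - r‖ ^ 2 + 1) := min_le_right _ _
      have h6 : t * (‖e - r‖ ^ 2 + 1) ≤ 2 * ε := by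
        rw [← le_div_iff₀ hpos]; exact h5
      nlinarith [sq_nonneg ‖e - r‖]
    linarith
  -- Step 2: rewrite the inner product via the adjoint
  have hadj : ⟪(ContinuousLinearMap.adjoint A) w, xδ - xt⟫ = ⟪w, e - r⟫ := by
    rw [ContinuousLinearMap.adjoint_inner_left, ← hAdiff, map_sub]
  -- Step 3: combine
  have step3 : δ * (ψ xδ - ψ xt - ⟪(ContinuousLinearMap.adjoint A) w, xδ - xt⟫)
      ≤ ⟪r - δ • w, e - δ • w⟫ - ‖r - δ • w‖ ^ 2 := by
    have expand : ⟪r - δ • w, e - δ • w⟫ - ‖r - δ • w‖ ^ 2 = ⟪r - δ • w, e - r⟫ := by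
      rw [show e - δ • w = (e - r) + (r - δ • w) by abel, inner_add_right,
        real_inner_self_eq_norm_sq]
      ring
    rw [expand, hadj]
    have : ⟪r - δ • w, e - r⟫ = ⟪r, e - r⟫ - δ * ⟪w, e - r⟫ := by
      rw [inner_sub_left, real_inner_smul_left]
    rw [this]
    nlinarith [key]
  -- Step 4: Cauchy-Schwarz and completing the square
  have step4 : ⟪r - δ • w, e - δ • w⟫ - ‖r - δ • w‖ ^ 2 ≤ ‖e - δ • w‖ ^ 2 / 4 := by
    have hcs := real_inner_le_norm (r - δ • w) (e - δ • w)
    nlinarith [sq_nonneg (‖r - δ • w‖ - ‖e - δ • w‖ / 2)]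
  -- Step 5: bound ‖e - δw‖ and finish
  have hbound : ‖e - δ • w‖ ≤ δ * (1 + ‖w‖) := by
    calc ‖e - δ • w‖ ≤ ‖e‖ + ‖δ • w‖ := norm_sub_le _ _
      _ ≤ δ + δ * ‖w‖ := by
          rw [norm_smul, Real.norm_eq_abs, abs_of_pos hδ]
          exact add_le_add hnoise le_rfl
      _ = δ * (1 + ‖w‖) := by ring
  have hfinal : ‖e - δ • w‖ ^ 2 / 4 ≤ δ ^ 2 * (‖w‖ ^ 2 + 1) / 2 := by
    have h1 : ‖e - δ • w‖ ^ 2 ≤ (δ * (1 + ‖w‖)) ^ 2 :=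
      pow_le_pow_left₀ (norm_nonneg _) hbound 2
    nlinarith [sq_nonneg (1 - ‖w‖), sq_nonneg δ]
  have hfin : δ * (ψ xδ - ψ xt - ⟪(ContinuousLinearMap.adjoint A) w, xδ - xt⟫)
      ≤ δ * (δ * (‖w‖ ^ 2 + 1) / 2) := by
    have := le_trans step3 (le_trans step4 hfinal)
    nlinarith [this]
  exact le_of_mul_le_mul_left hfin hδ
end

section
/- Let X and Y be real Hilbert spaces, A : X → Y a bounded linear operator with adjoint A*, and ψ : X → ℝ a convex function. Let x̃ ∈ X, y⁰ = A x̃, and suppose A* w ∈ ∂ψ(x̃) for some w ∈ Y with w ≠ 0. Let δ > 0 and y^δ ∈ Y with ‖y^δ − y⁰‖ ≤ δ. If x_λ minimizes F(x) = ½‖y^δ − A x‖² + λ ψ(x) over X with the optimal parameter choice λ = δ/‖w‖, then ψ(x_λ) − ψ(x̃) − ⟨A* w, x_λ − x̃⟩ ≤ δ‖w‖. -/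
open RealInnerProductSpace

set_option maxHeartbeats 1600000 in
/-- Optimal parameter choice `λ = δ/‖w‖`: the Bregman distance is bounded by `δ‖w‖`. -/
theorem bregman_rate_optimal_lambda
    {X Y : Type*} [NormedAddCommGroup X] [InnerProductSpace ℝ X] [CompleteSpace X]
    [NormedAddCommGroup Y] [InnerProductSpace ℝ Y] [CompleteSpace Y]
    (A : X →L[ℝ] Y) (ψ : X → ℝ) (hψ : ConvexOn ℝ Set.univ ψ)
    (xt : X) (w : Y) (hw : w ≠ 0)
    (hSC : ∀ x : X, ψ x ≥ ψ xt + ⟪(ContinuousLinearMap.adjoint A) w, x - xt⟫)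
    (δ : ℝ) (hδ : 0 < δ)
    (yδ : Y) (hnoise : ‖yδ - A xt‖ ≤ δ)
    (xl : X)
    (hmin : ∀ x : X,
      (1 / 2) * ‖yδ - A xl‖ ^ 2 + (δ / ‖w‖) * ψ xl ≤
        (1 / 2) * ‖yδ - A x‖ ^ 2 + (δ / ‖w‖) * ψ x) :
    ψ xl - ψ xt - ⟪(ContinuousLinearMap.adjoint A) w, xl - xt⟫ ≤ δ * ‖w‖ := by
  have hwpos : (0:ℝ) < ‖w‖ := norm_pos_iff.mpr hw
  set lam : ℝ := δ / ‖w‖ with hlamdef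
  have hlam : 0 < lam := div_pos hδ hwpos
  have hlamw : lam * ‖w‖ = δ := div_mul_cancel₀ δ (ne_of_gt hwpos)
  set r : Y := yδ - A xl with hr
  set d : Y := yδ - A xt with hd
  set s : X := xt - xl with hs
  -- Step 1: variational inequality ⟪r, A s⟫ ≤ lam * (ψ xt - ψ xl)
  have key : ⟪r, A s⟫ ≤ lam * (ψ xt - ψ xl) := by
    apply le_of_forall_pos_le_add
    intro ε hε
    set t : ℝ := min 1 (ε / (‖A s‖ ^ 2 / 2 + 1)) with ht
    have hden : (0:ℝ) < ‖A s‖ ^ 2 / 2 + 1 := by positivity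
    have ht0 : 0 < t := lt_min one_pos (div_pos hε hden)
    have ht1 : t ≤ 1 := min_le_left _ _
    -- minimality at x = xl + t • s
    have h1 := hmin (xl + t • s)
    have hAx : yδ - A (xl + t • s) = r - t • (A s) := by
      simp [hr, map_add, map_smul]; abel
    have hψt : ψ (xl + t • s) ≤ (1 - t) * ψ xl + t * ψ xt := by
      have := hψ.2 (Set.mem_univ xl) (Set.mem_univ xt)
        (by linarith : (0:ℝ) ≤ 1 - t) (le_of_lt ht0) (by ring)
      have hpt : (1 - t) • xl + t • xt = xl + t • s := by
        simp [hs, smul_sub, sub_smul]; abel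
      rw [hpt] at this
      simpa using this
    have hnormsq : ‖r - t • (A s)‖ ^ 2
        = ‖r‖ ^ 2 - 2 * (t * ⟪r, A s⟫) + t ^ 2 * ‖A s‖ ^ 2 := by
      rw [norm_sub_sq_real, real_inner_smul_right, norm_smul, Real.norm_eq_abs,
        abs_of_pos ht0, mul_pow]
    rw [hAx] at h1
    have h2 : t * ⟪r, A s⟫ ≤ t ^ 2 / 2 * ‖A s‖ ^ 2 + lam * (t * (ψ xt - ψ xl)) := by
      nlinarith [h1, hnormsq, hψt, hlam]
    have h3 : ⟪r, A s⟫ ≤ t / 2 * ‖A s‖ ^ 2 + lam * (ψ xt - ψ xl) :=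
      le_of_mul_le_mul_left (by nlinarith) ht0
    have htε : t / 2 * ‖A s‖ ^ 2 ≤ ε := by
      have h4 : t ≤ ε / (‖A s‖ ^ 2 / 2 + 1) := min_le_right _ _
      have h5 : t * (‖A s‖ ^ 2 / 2 + 1) ≤ ε := by
        rw [← le_div_iff₀ hden]; exact h4
      nlinarith
    linarith
  -- Step 2: estimate
  have hadj : ⟪(ContinuousLinearMap.adjoint A) w, xl - xt⟫ = ⟪w, A (xl - xt)⟫ :=
    ContinuousLinearMap.adjoint_inner_left A (xl - xt) w
  have hAdr : A (xl - xt) = d - r := by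
    rw [map_sub, hd, hr]; abel
  have hAs : A s = -(d - r) := by
    rw [hs, map_sub, hd, hr]; abel
  -- lam * D ≤ ⟪r - lam•w, d - r⟫
  have hDbound : lam * (ψ xl - ψ xt - ⟪(ContinuousLinearMap.adjoint A) w, xl - xt⟫)
      ≤ ⟪r - lam • w, d - r⟫ := by
    have h6 : lam * (ψ xl - ψ xt) ≤ ⟪r, d - r⟫ := by
      have : ⟪r, A s⟫ = -⟪r, d - r⟫ := by rw [hAs, inner_neg_right]
      nlinarith [key]
    rw [hadj, hAdr]
    rw [inner_sub_left, real_inner_smul_left]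
    nlinarith [h6]
  -- ⟪p, q - p⟫ ≤ ‖q‖²/4 with p = r - lam•w, q = d - lam•w
  set p : Y := r - lam • w with hp
  set q : Y := d - lam • w with hq
  have hqp : d - r = q - p := by rw [hp, hq]; abel
  have hipq : ⟪p, q - p⟫ ≤ ‖q‖ ^ 2 / 4 := by
    have hcs : ⟪p, q⟫ ≤ ‖p‖ * ‖q‖ := real_inner_le_norm p q
    have hpn : ⟪p, p⟫ = ‖p‖ ^ 2 := real_inner_self_eq_norm_sq p
    rw [inner_sub_right]
    nlinarith [sq_nonneg (‖p‖ - ‖q‖ / 2)]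
  have hqnorm : ‖q‖ ≤ 2 * δ := by
    calc ‖q‖ ≤ ‖d‖ + ‖lam • w‖ := norm_sub_le _ _
    _ ≤ δ + δ := by
        rw [norm_smul, Real.norm_eq_abs, abs_of_pos hlam, hlamw]
        exact add_le_add hnoise le_rfl
    _ = 2 * δ := by ring
  have hfinal : lam * (ψ xl - ψ xt - ⟪(ContinuousLinearMap.adjoint A) w, xl - xt⟫) ≤ δ ^ 2 := by
    calc lam * _ ≤ ⟪r - lam • w, d - r⟫ := hDbound
    _ = ⟪p, q - p⟫ := by rw [hqp]
    _ ≤ ‖q‖ ^ 2 / 4 := hipq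
    _ ≤ δ ^ 2 := by nlinarith [norm_nonneg q]
  -- conclude: divide by lam
  have hδ2 : δ ^ 2 = lam * (δ * ‖w‖) := by
    field_simp [hlamdef]; ring_nf; exact hlamw.symm
  rw [hδ2] at hfinal
  exact le_of_mul_le_mul_left hfinal hlam
end

section
/- Let X and Y be real Hilbert spaces, A : X → Y a bounded linear operator with adjoint A*, and ψ : X → ℝ a convex function. Let x̃ ∈ X and suppose A* w ∈ ∂ψ(x̃) for some w ∈ Y. Let λ > 0 and suppose x_λ minimizes the noise-free functional F(x) = ½‖A x̃ − A x‖² + λ ψ(x) over X (i.e., the data is the exact measurement y⁰ = A x̃). Then the Bregman distance satisfies ψ(x_λ) − ψ(x̃) − ⟨A* w, x_λ − x̃⟩ ≤ λ‖w‖²/2. -/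
open RealInnerProductSpace

/-- Noise-free case: if `x_λ` minimizes `½‖A x̃ − A x‖² + λ ψ(x)` then the Bregman
distance satisfies `ψ(x_λ) − ψ(x̃) − ⟨A* w, x_λ − x̃⟩ ≤ λ‖w‖²/2`. -/
theorem bregman_rate_noise_free
    {X Y : Type*} [NormedAddCommGroup X] [InnerProductSpace ℝ X] [CompleteSpace X]
    [NormedAddCommGroup Y] [InnerProductSpace ℝ Y] [CompleteSpace Y]
    (A : X →L[ℝ] Y) (ψ : X → ℝ) (hψ : ConvexOn ℝ Set.univ ψ)
    (xt : X) (w : Y)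
    (hSC : ∀ x : X, ψ x ≥ ψ xt + ⟪(ContinuousLinearMap.adjoint A) w, x - xt⟫)
    (lam : ℝ) (hlam : 0 < lam)
    (xl : X)
    (hmin : ∀ x : X,
      (1 / 2) * ‖A xt - A xl‖ ^ 2 + lam * ψ xl ≤ (1 / 2) * ‖A xt - A x‖ ^ 2 + lam * ψ x) :
    ψ xl - ψ xt - ⟪(ContinuousLinearMap.adjoint A) w, xl - xt⟫ ≤ lam * ‖w‖ ^ 2 / 2 := by
  have h1 := hmin xt
  simp only [sub_self, norm_zero] at h1
  have hadj : ⟪(ContinuousLinearMap.adjoint A) w, xl - xt⟫ = ⟪w, A xl - A xt⟫ := by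
    rw [real_inner_comm, ContinuousLinearMap.adjoint_inner_right, map_sub,
      real_inner_comm]
  set r : Y := A xl - A xt with hr
  have hsq : (0:ℝ) ≤ ‖r + lam • w‖ ^ 2 := sq_nonneg _
  have hexp : ‖r + lam • w‖ ^ 2 = ‖r‖ ^ 2 + 2 * (lam * ⟪r, w⟫) + lam ^ 2 * ‖w‖ ^ 2 := by
    rw [norm_add_sq_real, real_inner_smul_right, norm_smul, Real.norm_eq_abs,
      abs_of_pos hlam, mul_pow]
  have key : lam * (ψ xl - ψ xt - ⟪w, r⟫) ≤ lam ^ 2 * ‖w‖ ^ 2 / 2 := by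
    have hnorm : ‖A xt - A xl‖ = ‖r‖ := by rw [hr, norm_sub_rev]
    rw [hnorm] at h1
    have hir : ⟪w, r⟫ = ⟪r, w⟫ := real_inner_comm _ _
    nlinarith [hsq, hexp]
  rw [hadj]
  nlinarith [key, hlam]
end
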